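/- Let T₁, T₂ be the Bass–Serre trees of free products A₁ * B₁ and A₂ * B₂ (edges indexed by group elements as above), and let Φ : A₁ * B₁ → A₂ * B₂ be the bijection induced by basepoint-preserving bijections α : A₁ → A₂, β : B₁ → B₂ via reduced normal forms. Then the map sending edge g ↦ Φ(g) extends to a simplicial isomorphism ι : T₁ → T₂ carrying the vertex stabilized by B₁ to the vertex stabilized by B₂. -/

import Mathlib

set_option linter.unusedSectionVars false


open Monoid

/-- Reduced expressions in a free product `A ∗ B`. -/
def IsReducedWord {A B : Type*} [Group A] [Group B] (w : List (A × B)) : Prop :=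
  (∀ i (h : i < w.length), 0 < i → (w.get ⟨i, h⟩).1 ≠ 1) ∧
  (∀ i (h : i < w.length), i + 1 < w.length → (w.get ⟨i, h⟩).2 ≠ 1) ∧
  w ≠ [(1, 1)]

/-- Evaluation of a word `[(a₁,b₁),…,(aₙ,bₙ)]` to `a₁b₁⋯aₙbₙ ∈ A ∗ B`. -/
def evalWord {A B : Type*} [Group A] [Group B] (w : List (A × B)) : Coprod A B :=
  (w.map fun p => Coprod.inl p.1 * Coprod.inr p.2).prod

section Helpers
variable {A B : Type*} [Group A] [Group B]

/-- condition on first components -/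
def ACond (w : List (A × B)) : Prop := ∀ i (h : i < w.length), 0 < i → w[i].1 ≠ 1
/-- all second components nontrivial -/
def BCond (w : List (A × B)) : Prop := ∀ i (h : i < w.length), w[i].2 ≠ 1

lemma ACond_concat {w : List (A × B)} {a b} :
    ACond (w ++ [(a, b)]) ↔ ACond w ∧ (w ≠ [] → a ≠ 1) := by
  constructor
  · intro h
    refine ⟨fun i hi h0 => ?_, fun hw => ?_⟩
    · have := h i (by simp; omega) h0
      rwa [List.getElem_append_left hi] at this
    · have hl : 0 < w.length := List.length_pos_iff.2 hw
      have := h w.length (by simp) hl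
      simpa using this
  · rintro ⟨h1, h2⟩ i hi h0
    rcases lt_or_ge i w.length with hlt | hge
    · rw [List.getElem_append_left hlt]; exact h1 i hlt h0
    · have : i = w.length := by simp at hi; omega
      subst this
      simpa using h2 (by intro hw; subst hw; simp at h0)

lemma BCond_concat {w : List (A × B)} {a b} :
    BCond (w ++ [(a, b)]) ↔ BCond w ∧ b ≠ 1 := by
  constructor
  · intro h
    refine ⟨fun i hi => ?_, ?_⟩
    · have := h i (by simp; omega)
      rwa [List.getElem_append_left hi] at this
    · have := h w.length (by simp)
      simpa using this
  · rintro ⟨h1, h2⟩ i hi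
    rcases lt_or_ge i w.length with hlt | hge
    · rw [List.getElem_append_left hlt]; exact h1 i hlt
    · have : i = w.length := by simp at hi; omega
      subst this; simpa using h2

lemma reduced_concat_iff {w : List (A × B)} {a b} :
    IsReducedWord (w ++ [(a, b)]) ↔
      ACond w ∧ (w ≠ [] → a ≠ 1) ∧ BCond w ∧ ¬(w = [] ∧ a = 1 ∧ b = 1) := by
  unfold IsReducedWord
  simp only [List.get_eq_getElem]
  constructor
  · rintro ⟨h1, h2, h3⟩
    have hA : ACond (w ++ [(a,b)]) := h1
    rw [ACond_concat] at hA
    refine ⟨hA.1, hA.2, fun i hi => ?_, ?_⟩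
    · have := h2 i (by simp; omega) (by simp; omega)
      rwa [List.getElem_append_left hi] at this
    · rintro ⟨rfl, rfl, rfl⟩; simp at h3
  · rintro ⟨h1, h2, h3, h4⟩
    refine ⟨(ACond_concat).2 ⟨h1, h2⟩, fun i hi hi1 => ?_, ?_⟩
    · have hlt : i < w.length := by simp at hi1; omega
      rw [List.getElem_append_left hlt]; exact h3 i hlt
    · intro he
      have : w = [] ∧ a = 1 ∧ b = 1 := by
        rcases w with _ | ⟨x, t⟩
        · simp at he; exact ⟨rfl, he.1, he.2⟩
        · exfalso
          have : (x :: t ++ [(a,b)]).length = 1 := by rw [he]; simp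
          simp at this
      exact h4 this

lemma reduced_of_concat {w : List (A × B)} {a b} (h : IsReducedWord (w ++ [(a, b)])) :
    IsReducedWord w := by
  rw [reduced_concat_iff] at h
  obtain ⟨h1, h2, h3, h4⟩ := h
  rcases List.eq_nil_or_concat w with rfl | ⟨w₁, ⟨c, d⟩, rfl⟩
  all_goals simp only [List.concat_eq_append] at *
  · exact ⟨by simp, by simp, by simp⟩
  · rw [ACond_concat] at h1
    rw [BCond_concat] at h3
    exact reduced_concat_iff.2 ⟨h1.1, h1.2, h3.1, by rintro ⟨_, _, rfl⟩; exact h3.2 rfl⟩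

lemma evalWord_nil : evalWord ([] : List (A × B)) = 1 := rfl

lemma evalWord_concat (w : List (A × B)) (a b) :
    evalWord (w ++ [(a, b)]) = evalWord w * Coprod.inl a * Coprod.inr b := by
  simp [evalWord, mul_assoc]

end Helpers

lemma evalWord_singleton {A B : Type*} [Group A] [Group B] (a : A) (b : B) :
    evalWord [(a, b)] = Coprod.inl a * Coprod.inr b := by simp [evalWord]

lemma evalWord_cons {A B : Type*} [Group A] [Group B] (a : A) (b : B) (w : List (A × B)) :
    evalWord ((a, b) :: w) = Coprod.inl a * Coprod.inr b * evalWord w := by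
  simp [evalWord, mul_assoc]

section Step
variable {A₁ B₁ A₂ B₂ : Type*} [Group A₁] [Group B₁] [Group A₂] [Group B₂]

lemma evalWord_append' {A B : Type*} [Group A] [Group B] (w₁ w₂ : List (A × B)) :
    evalWord (w₁ ++ w₂) = evalWord w₁ * evalWord w₂ := by simp [evalWord]

lemma step_inl (α : A₁ → A₂) (β : B₁ → B₂) (hβ1 : β 1 = 1)
    (w : List (A₁ × B₁)) (hw : IsReducedWord w) (a : A₁) :
    ∃ w', IsReducedWord w' ∧ evalWord w' = evalWord w * Coprod.inl a ∧
      (evalWord (w.map fun p => (α p.1, β p.2)))⁻¹ *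
        evalWord (w'.map fun p => (α p.1, β p.2)) ∈ (Coprod.inl : A₂ →* Coprod A₂ B₂).range := by
  by_cases ha : a = 1
  · exact ⟨w, hw, by simp [ha], ⟨1, by simp⟩⟩
  rcases List.eq_nil_or_concat w with rfl | ⟨w₀, ⟨an, bn⟩, rfl⟩
  · refine ⟨[(a, 1)], ?_, ?_, ?_⟩
    · exact (reduced_concat_iff (w := [])).2 ⟨by simp [ACond], by simp, by simp [BCond],
        by rintro ⟨_, rfl, _⟩; exact ha rfl⟩
    · simp [evalWord_singleton, evalWord_nil]
    · exact ⟨α a, by simp [evalWord_singleton, evalWord_nil, hβ1]⟩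
  simp only [List.concat_eq_append] at *
  have hw₀ : IsReducedWord w₀ := reduced_of_concat hw
  rw [reduced_concat_iff] at hw
  obtain ⟨hA, han, hB, h11⟩ := hw
  by_cases hb : bn = 1
  · subst hb
    by_cases hana : an * a = 1
    · -- drop the last letter
      refine ⟨w₀, hw₀, ?_, ?_⟩
      · rw [evalWord_concat, mul_assoc, mul_assoc]
        simp only [map_one, one_mul]
        rw [← map_mul, hana, map_one, mul_one]
      · rw [List.map_append, evalWord_append']
        refine ⟨(α an)⁻¹, ?_⟩
        simp [evalWord_singleton, hβ1, mul_assoc]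
    · refine ⟨w₀ ++ [(an * a, 1)], ?_, ?_, ?_⟩
      · exact reduced_concat_iff.2 ⟨hA, fun _ => hana, hB, by rintro ⟨_, h1, _⟩; exact hana h1⟩
      · rw [evalWord_concat, evalWord_concat]
        simp [mul_assoc, ← map_mul]
      · rw [List.map_append, List.map_append, evalWord_append', evalWord_append']
        refine ⟨(α an)⁻¹ * α (an * a), ?_⟩
        simp [evalWord_singleton, hβ1, mul_assoc]
  · -- bn ≠ 1 : append a new letter
    refine ⟨(w₀ ++ [(an, bn)]) ++ [(a, 1)], ?_, ?_, ?_⟩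
    · exact reduced_concat_iff.2 ⟨ACond_concat.2 ⟨hA, han⟩, fun _ => ha,
        BCond_concat.2 ⟨hB, hb⟩, by simp⟩
    · rw [evalWord_concat]; simp
    · refine ⟨α a, ?_⟩
      simp [evalWord_append', evalWord_cons, evalWord_nil, hβ1, mul_assoc]

lemma step_inr (α : A₁ → A₂) (β : B₁ → B₂) (hα1 : α 1 = 1)
    (w : List (A₁ × B₁)) (hw : IsReducedWord w) (b : B₁) :
    ∃ w', IsReducedWord w' ∧ evalWord w' = evalWord w * Coprod.inr b ∧
      (evalWord (w.map fun p => (α p.1, β p.2)))⁻¹ *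
        evalWord (w'.map fun p => (α p.1, β p.2)) ∈ (Coprod.inr : B₂ →* Coprod A₂ B₂).range := by
  by_cases hb : b = 1
  · exact ⟨w, hw, by simp [hb], ⟨1, by simp⟩⟩
  rcases List.eq_nil_or_concat w with rfl | ⟨w₀, ⟨an, bn⟩, rfl⟩
  · refine ⟨[(1, b)], ?_, ?_, ?_⟩
    · exact (reduced_concat_iff (w := [])).2 ⟨by simp [ACond], by simp, by simp [BCond],
        by rintro ⟨_, _, rfl⟩; exact hb rfl⟩
    · simp [evalWord_singleton, evalWord_nil]
    · exact ⟨β b, by simp [evalWord_singleton, evalWord_nil, hα1]⟩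
  simp only [List.concat_eq_append] at *
  rw [reduced_concat_iff] at hw
  obtain ⟨hA, han, hB, h11⟩ := hw
  by_cases key : w₀ = [] ∧ an = 1 ∧ bn * b = 1
  · -- collapses to the empty word
    obtain ⟨rfl, rfl, hbnb⟩ := key
    refine ⟨[], ⟨by simp, by simp, by simp⟩, ?_, ?_⟩
    · rw [evalWord_concat, evalWord_nil]
      simp [mul_assoc, ← map_mul, hbnb]
    · rw [List.map_append, evalWord_append']
      refine ⟨(β bn)⁻¹, ?_⟩
      simp [evalWord_singleton, evalWord_nil, hα1, mul_assoc]
  · refine ⟨w₀ ++ [(an, bn * b)], ?_, ?_, ?_⟩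
    · refine reduced_concat_iff.2 ⟨hA, han, hB, ?_⟩
      rintro ⟨h1, h2, h3⟩; exact key ⟨h1, h2, h3⟩
    · rw [evalWord_concat, evalWord_concat]
      simp [mul_assoc, ← map_mul]
    · rw [List.map_append, List.map_append, evalWord_append', evalWord_append']
      refine ⟨(β bn)⁻¹ * β (bn * b), ?_⟩
      simp [evalWord_singleton, mul_assoc]

end Step

section Transfer
variable {A₁ B₁ A₂ B₂ : Type*} [Group A₁] [Group B₁] [Group A₂] [Group B₂]

lemma exists_reduced {A B : Type*} [Group A] [Group B] (g : Coprod A B) :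
    ∃ w : List (A × B), IsReducedWord w ∧ evalWord w = g := by
  have key : ∀ g : Coprod A B, ∀ h : Coprod A B,
      (∃ w, IsReducedWord w ∧ evalWord w = h) → ∃ w, IsReducedWord w ∧ evalWord w = h * g := by
    intro g
    induction g using Coprod.induction_on' with
    | one => intro h hh; simpa using hh
    | inl_mul a x ih =>
      intro h hh
      obtain ⟨w, hw, he⟩ := hh
      obtain ⟨w', hw', he', -⟩ := step_inl (id : A → A) (id : B → B) rfl w hw a
      have := ih (h * Coprod.inl a) ⟨w', hw', by simpa [he] using he'⟩
      simpa [mul_assoc] using this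
    | inr_mul b x ih =>
      intro h hh
      obtain ⟨w, hw, he⟩ := hh
      obtain ⟨w', hw', he', -⟩ := step_inr (id : A → A) (id : B → B) rfl w hw b
      have := ih (h * Coprod.inr b) ⟨w', hw', by simpa [he] using he'⟩
      simpa [mul_assoc] using this
  simpa using key g 1 ⟨[], ⟨by simp, by simp, by simp⟩, rfl⟩

variable {α : A₁ → A₂} {β : B₁ → B₂} {Φ : Coprod A₁ B₁ ≃ Coprod A₂ B₂}

lemma transfer_inl (hβ1 : β 1 = 1)
    (hΦ : ∀ w : List (A₁ × B₁), IsReducedWord w →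
      Φ (evalWord w) = evalWord (w.map fun p => (α p.1, β p.2)))
    (g : Coprod A₁ B₁) (a : A₁) :
    (Φ g)⁻¹ * Φ (g * Coprod.inl a) ∈ (Coprod.inl : A₂ →* Coprod A₂ B₂).range := by
  obtain ⟨w, hw, rfl⟩ := exists_reduced g
  obtain ⟨w', hw', he', hd⟩ := step_inl α β hβ1 w hw a
  rw [← he', hΦ w hw, hΦ w' hw']
  exact hd

lemma transfer_inr (hα1 : α 1 = 1)
    (hΦ : ∀ w : List (A₁ × B₁), IsReducedWord w →
      Φ (evalWord w) = evalWord (w.map fun p => (α p.1, β p.2)))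
    (g : Coprod A₁ B₁) (b : B₁) :
    (Φ g)⁻¹ * Φ (g * Coprod.inr b) ∈ (Coprod.inr : B₂ →* Coprod A₂ B₂).range := by
  obtain ⟨w, hw, rfl⟩ := exists_reduced g
  obtain ⟨w', hw', he', hd⟩ := step_inr α β hα1 w hw b
  rw [← he', hΦ w hw, hΦ w' hw']
  exact hd

end Transfer

lemma reduced_map {A₁ B₁ A₂ B₂ : Type*} [Group A₁] [Group B₁] [Group A₂] [Group B₂]
    {α' : A₁ → A₂} {β' : B₁ → B₂} (hα' : ∀ x, α' x = 1 → x = 1) (hβ' : ∀ x, β' x = 1 → x = 1)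
    {w : List (A₁ × B₁)} (hw : IsReducedWord w) :
    IsReducedWord (w.map fun p => (α' p.1, β' p.2)) := by
  obtain ⟨h1, h2, h3⟩ := hw
  refine ⟨?_, ?_, ?_⟩
  · intro i hi h0
    simp only [List.get_eq_getElem, List.getElem_map]
    intro hc
    exact h1 i (by simpa using hi) h0 (hα' _ hc)
  · intro i hi hi1
    simp only [List.get_eq_getElem, List.getElem_map]
    intro hc
    exact h2 i (by simpa using hi) (by simpa using hi1) (hβ' _ hc)
  · intro hc
    rcases w with _ | ⟨⟨a, b⟩, t⟩
    · simp at hc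
    · rcases t with _ | _
      · simp only [List.map_cons, List.map_nil, List.cons.injEq, Prod.mk.injEq] at hc
        obtain ⟨⟨ha, hb⟩, -⟩ := hc
        exact h3 (by rw [hα' _ ha, hβ' _ hb])
      · simp at hc

lemma symm_hPhi {A₁ B₁ A₂ B₂ : Type*} [Group A₁] [Group B₁] [Group A₂] [Group B₂]
    {α : A₁ → A₂} {β : B₁ → B₂} (hα : Function.Bijective α) (hβ : Function.Bijective β)
    (hα1 : α 1 = 1) (hβ1 : β 1 = 1) {Φ : Coprod A₁ B₁ ≃ Coprod A₂ B₂}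
    (hΦ : ∀ w : List (A₁ × B₁), IsReducedWord w →
        Φ (evalWord w) = evalWord (w.map fun p => (α p.1, β p.2))) :
    ∀ w : List (A₂ × B₂), IsReducedWord w →
      Φ.symm (evalWord w) = evalWord (w.map fun p =>
        ((Equiv.ofBijective α hα).symm p.1, (Equiv.ofBijective β hβ).symm p.2)) := by
  intro w hw
  set eα := Equiv.ofBijective α hα
  set eβ := Equiv.ofBijective β hβ
  have hα' : ∀ x : A₂, eα.symm x = 1 → x = 1 := by
    intro x hx
    have : x = eα 1 := by rw [← hx, eα.apply_symm_apply]
    rw [this]; exact hα1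
  have hβ' : ∀ x : B₂, eβ.symm x = 1 → x = 1 := by
    intro x hx
    have : x = eβ 1 := by rw [← hx, eβ.apply_symm_apply]
    rw [this]; exact hβ1
  have hred := reduced_map hα' hβ' hw
  have h := hΦ _ hred
  rw [List.map_map] at h
  have hcomp : ((fun p : A₁ × B₁ => (α p.1, β p.2)) ∘
      fun p : A₂ × B₂ => (eα.symm p.1, eβ.symm p.2)) = id := by
    funext p
    simp only [Function.comp_apply, id_eq]
    have h1 : α (eα.symm p.1) = eα (eα.symm p.1) := rfl
    rw [h1, eα.apply_symm_apply]
    have h2 : β (eβ.symm p.2) = eβ (eβ.symm p.2) := rfl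
    rw [h2, eβ.apply_symm_apply]
  rw [hcomp, List.map_id] at h
  rw [← h, Φ.symm_apply_apply]

/-- Vertex set of the Bass–Serre tree of `A ∗ B`: the disjoint union `(A∗B)/A ⊔ (A∗B)/B`. -/
def BSVert (A B : Type*) [Group A] [Group B] : Type _ :=
  (Coprod A B ⧸ (Coprod.inl : A →* Coprod A B).range) ⊕
    (Coprod A B ⧸ (Coprod.inr : B →* Coprod A B).range)

/-- The Bass–Serre tree of `A ∗ B`: `g ∈ A ∗ B` gives an edge joining `gA` and `gB`. -/
def BSTree (A B : Type*) [Group A] [Group B] : SimpleGraph (BSVert A B) where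
  Adj x y :=
    (∃ g : Coprod A B, x = Sum.inl (QuotientGroup.mk g) ∧ y = Sum.inr (QuotientGroup.mk g)) ∨
    (∃ g : Coprod A B, x = Sum.inr (QuotientGroup.mk g) ∧ y = Sum.inl (QuotientGroup.mk g))
  symm := ⟨fun x y h =>
    h.elim (fun ⟨g, hx, hy⟩ => Or.inr ⟨g, hy, hx⟩) (fun ⟨g, hx, hy⟩ => Or.inl ⟨g, hy, hx⟩)⟩
  loopless := by
    constructor
    rintro x (⟨g, h1, h2⟩ | ⟨g, h1, h2⟩) <;> rw [h1] at h2 <;> simp at h2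

/-- The normal-form bijection `Φ : A₁ ∗ B₁ → A₂ ∗ B₂` induced by basepoint-preserving
bijections `α`, `β` of the factors induces, via `edge g ↦ edge Φ(g)`, a simplicial
isomorphism of the Bass–Serre trees carrying the vertex stabilized by `B₁` to the vertex
stabilized by `B₂`. -/
theorem normal_form_bijection_induces_tree_isomorphism
    {A₁ B₁ A₂ B₂ : Type*} [Group A₁] [Group B₁] [Group A₂] [Group B₂]
    (α : A₁ → A₂) (β : B₁ → B₂)
    (hα : Function.Bijective α) (hβ : Function.Bijective β)
    (hα1 : α 1 = 1) (hβ1 : β 1 = 1)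
    (Φ : Coprod A₁ B₁ ≃ Coprod A₂ B₂)
    (hΦ : ∀ w : List (A₁ × B₁), IsReducedWord w →
        Φ (evalWord w) = evalWord (w.map fun p => (α p.1, β p.2))) :
    ∃ ι : BSTree A₁ B₁ ≃g BSTree A₂ B₂,
      (∀ g : Coprod A₁ B₁,
          ι (Sum.inl (QuotientGroup.mk g)) = Sum.inl (QuotientGroup.mk (Φ g)) ∧
          ι (Sum.inr (QuotientGroup.mk g)) = Sum.inr (QuotientGroup.mk (Φ g))) ∧
      ι (Sum.inr (QuotientGroup.mk (1 : Coprod A₁ B₁))) =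
        Sum.inr (QuotientGroup.mk (1 : Coprod A₂ B₂)) := by
  classical
  have hΦ' := symm_hPhi hα hβ hα1 hβ1 hΦ
  have hα1' : (Equiv.ofBijective α hα).symm 1 = 1 := by
    have : (1 : A₂) = (Equiv.ofBijective α hα) 1 := hα1.symm
    rw [this, Equiv.symm_apply_apply]
  have hβ1' : (Equiv.ofBijective β hβ).symm 1 = 1 := by
    have : (1 : B₂) = (Equiv.ofBijective β hβ) 1 := hβ1.symm
    rw [this, Equiv.symm_apply_apply]
  -- coset transfers
  have TL : ∀ g g' : Coprod A₁ B₁,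
      (QuotientGroup.mk g : _ ⧸ (Coprod.inl : A₁ →* Coprod A₁ B₁).range) = QuotientGroup.mk g' →
      (QuotientGroup.mk (Φ g) : _ ⧸ (Coprod.inl : A₂ →* Coprod A₂ B₂).range)
        = QuotientGroup.mk (Φ g') := by
    intro g g' h
    rw [QuotientGroup.eq] at h ⊢
    obtain ⟨a, ha⟩ := h
    have hg' : g' = g * Coprod.inl a := by rw [ha, mul_inv_cancel_left]
    rw [hg']
    exact transfer_inl hβ1 hΦ g a
  have TR : ∀ g g' : Coprod A₁ B₁,
      (QuotientGroup.mk g : _ ⧸ (Coprod.inr : B₁ →* Coprod A₁ B₁).range) = QuotientGroup.mk g' →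
      (QuotientGroup.mk (Φ g) : _ ⧸ (Coprod.inr : B₂ →* Coprod A₂ B₂).range)
        = QuotientGroup.mk (Φ g') := by
    intro g g' h
    rw [QuotientGroup.eq] at h ⊢
    obtain ⟨b, hb⟩ := h
    have hg' : g' = g * Coprod.inr b := by rw [hb, mul_inv_cancel_left]
    rw [hg']
    exact transfer_inr hα1 hΦ g b
  have TL' : ∀ g g' : Coprod A₂ B₂,
      (QuotientGroup.mk g : _ ⧸ (Coprod.inl : A₂ →* Coprod A₂ B₂).range) = QuotientGroup.mk g' →
      (QuotientGroup.mk (Φ.symm g) : _ ⧸ (Coprod.inl : A₁ →* Coprod A₁ B₁).range)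
        = QuotientGroup.mk (Φ.symm g') := by
    intro g g' h
    rw [QuotientGroup.eq] at h ⊢
    obtain ⟨a, ha⟩ := h
    have hg' : g' = g * Coprod.inl a := by rw [ha, mul_inv_cancel_left]
    rw [hg']
    exact transfer_inl hβ1' hΦ' g a
  have TR' : ∀ g g' : Coprod A₂ B₂,
      (QuotientGroup.mk g : _ ⧸ (Coprod.inr : B₂ →* Coprod A₂ B₂).range) = QuotientGroup.mk g' →
      (QuotientGroup.mk (Φ.symm g) : _ ⧸ (Coprod.inr : B₁ →* Coprod A₁ B₁).range)
        = QuotientGroup.mk (Φ.symm g') := by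
    intro g g' h
    rw [QuotientGroup.eq] at h ⊢
    obtain ⟨b, hb⟩ := h
    have hg' : g' = g * Coprod.inr b := by rw [hb, mul_inv_cancel_left]
    rw [hg']
    exact transfer_inr hα1' hΦ' g b
  -- quotient equivalences
  let eA : (Coprod A₁ B₁ ⧸ (Coprod.inl : A₁ →* Coprod A₁ B₁).range) ≃
      (Coprod A₂ B₂ ⧸ (Coprod.inl : A₂ →* Coprod A₂ B₂).range) :=
  { toFun := fun x => Quotient.liftOn' x (fun g => QuotientGroup.mk (Φ g))
      (fun g g' h => TL g g' (Quotient.sound' h))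
    invFun := fun x => Quotient.liftOn' x (fun g => QuotientGroup.mk (Φ.symm g))
      (fun g g' h => TL' g g' (Quotient.sound' h))
    left_inv := by
      intro x
      induction x using Quotient.inductionOn' with
      | h g => show QuotientGroup.mk (Φ.symm (Φ g)) = _; rw [Equiv.symm_apply_apply]
    right_inv := by
      intro x
      induction x using Quotient.inductionOn' with
      | h g => show QuotientGroup.mk (Φ (Φ.symm g)) = _; rw [Equiv.apply_symm_apply] }
  let eB : (Coprod A₁ B₁ ⧸ (Coprod.inr : B₁ →* Coprod A₁ B₁).range) ≃
      (Coprod A₂ B₂ ⧸ (Coprod.inr : B₂ →* Coprod A₂ B₂).range) :=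
  { toFun := fun x => Quotient.liftOn' x (fun g => QuotientGroup.mk (Φ g))
      (fun g g' h => TR g g' (Quotient.sound' h))
    invFun := fun x => Quotient.liftOn' x (fun g => QuotientGroup.mk (Φ.symm g))
      (fun g g' h => TR' g g' (Quotient.sound' h))
    left_inv := by
      intro x
      induction x using Quotient.inductionOn' with
      | h g => show QuotientGroup.mk (Φ.symm (Φ g)) = _; rw [Equiv.symm_apply_apply]
    right_inv := by
      intro x
      induction x using Quotient.inductionOn' with
      | h g => show QuotientGroup.mk (Φ (Φ.symm g)) = _; rw [Equiv.apply_symm_apply] }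
  let e : BSVert A₁ B₁ ≃ BSVert A₂ B₂ := Equiv.sumCongr eA eB
  have fwd : ∀ x y, (BSTree A₁ B₁).Adj x y → (BSTree A₂ B₂).Adj (e x) (e y) := by
    rintro x y (⟨g, rfl, rfl⟩ | ⟨g, rfl, rfl⟩)
    · exact Or.inl ⟨Φ g, rfl, rfl⟩
    · exact Or.inr ⟨Φ g, rfl, rfl⟩
  have bwd : ∀ x y, (BSTree A₂ B₂).Adj x y → (BSTree A₁ B₁).Adj (e.symm x) (e.symm y) := by
    rintro x y (⟨g, rfl, rfl⟩ | ⟨g, rfl, rfl⟩)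
    · exact Or.inl ⟨Φ.symm g, rfl, rfl⟩
    · exact Or.inr ⟨Φ.symm g, rfl, rfl⟩
  refine ⟨⟨e, ?_⟩, fun g => ⟨rfl, rfl⟩, ?_⟩
  · intro x y
    constructor
    · intro h
      have := bwd _ _ h
      simpa using this
    · exact fwd x y
  · show Sum.inr (QuotientGroup.mk (Φ 1)) = _
    have h1 : Φ 1 = 1 := by
      have := hΦ [] ⟨by simp, by simp, by simp⟩
      simpa [evalWord_nil] using this
    rw [h1]
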